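/- There exists a universal Martin-Löf test: a total computable f : ℕ → ℕ with Pr(O(W_{f(n)})) ≤ 2^{-n} for all n, such that every infinite binary sequence failing any Martin-Löf test (in sense 2) lies in ⋂_n O(W_{f(n)}). -/

import Mathlib

open MeasureTheory
open scoped ENNReal

/-- The length-`n` initial segment of an infinite binary sequence. -/
def pref (x : ℕ → Bool) (n : ℕ) : List Bool := List.ofFn (fun i : Fin n => x i)

/-- A set of binary strings is prefix-free if no member is a proper prefix of another. -/
def PFree (S : Set (List Bool)) : Prop := ∀ a ∈ S, ∀ b ∈ S, a <+: b → a = b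

/-- Kolmogorov complexity of `b` relative to machine `M`: the least length of an
input mapped by `M` to `b`, `∞` if there is none. -/
noncomputable def Cpx (M : List Bool →. List Bool) (b : List Bool) : ℕ∞ :=
  sInf {n : ℕ∞ | ∃ p : List Bool, b ∈ M p ∧ (p.length : ℕ∞) = n}

/-- A universal machine for plain complexity. -/
def Universal (U : List Bool →. List Bool) : Prop :=
  Partrec U ∧ ∀ L : List Bool →. List Bool, Partrec L →
    ∃ k : ℕ, ∀ b : List Bool, Cpx U b ≤ Cpx L b + (k : ℕ∞)

/-- A prefix-free universal machine: prefix-free domain, universal among machines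
with prefix-free domain. -/
def PFUniversal (V : List Bool →. List Bool) : Prop :=
  Partrec V ∧ PFree {p | (V p).Dom} ∧
    ∀ L : List Bool →. List Bool, Partrec L → PFree {p | (L p).Dom} →
      ∃ k : ℕ, ∀ b : List Bool, Cpx V b ≤ Cpx L b + (k : ℕ∞)

/-- `cyl S` is the set of infinite binary sequences extending some member of `S`. -/
def cyl (S : Set (List Bool)) : Set (ℕ → Bool) := {x | ∃ b ∈ S, pref x b.length = b}

/-- The `e`-th computably enumerable set of binary strings. -/
def W (e : ℕ) : Set (List Bool) :=
  {b | ((Denumerable.ofNat Nat.Partrec.Code e).eval (Encodable.encode b)).Dom}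

/-- The binary-digit expansion of a real number. -/
noncomputable def binSeq (r : ℝ) : ℕ → Bool := fun n => decide (⌊r * 2 ^ (n + 1)⌋ % 2 = 1)

/-- The fair-coin (uniform product) measure on Cantor space, as the pushforward of
Lebesgue measure on `(0,1]` under binary expansion. -/
noncomputable def coin : Measure (ℕ → Bool) :=
  Measure.map binSeq (volume.restrict (Set.Ioc (0 : ℝ) 1))

/-- Martin-Löf test in sense 2. -/
def MLTest (f : ℕ → ℕ) : Prop :=
  Computable f ∧ ∀ n : ℕ, coin (cyl (W (f n))) ≤ (2 : ℝ≥0∞)⁻¹ ^ n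

/-- `x` fails the sense-2 test `f`. -/
def Fails (x : ℕ → Bool) (f : ℕ → ℕ) : Prop := ∀ n : ℕ, x ∈ cyl (W (f n))

/-- Martin-Löf randomness (sense 2). -/
def MLRandom (x : ℕ → Bool) : Prop := ∀ f : ℕ → ℕ, MLTest f → ¬ Fails x f

/-- The dyadic rational value of a finite binary string. -/
noncomputable def sval (b : List Bool) : ℝ :=
  ∑ i : Fin b.length, if b.get i then ((2 : ℝ))⁻¹ ^ (i.val + 1) else 0

/-- Chaitin's halting probability of machine `V`. -/
noncomputable def Omega (V : List Bool →. List Bool) : ℝ :=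
  ∑' p : {p : List Bool // (V p).Dom}, ((2 : ℝ))⁻¹ ^ (p.val.length)

/-- Martin-Löf test in sense 1. -/
def MLTest1 (t : List Bool →. ℕ) : Prop :=
  Partrec t ∧ ∀ m : ℕ, coin (cyl {b | ∃ v ∈ t b, m ≤ v}) ≤ (2 : ℝ≥0∞)⁻¹ ^ m

/-- `x` passes the sense-1 test `t`: the values of `t` on `x`'s prefixes are bounded. -/
def Passes1 (x : ℕ → Bool) (t : List Bool →. ℕ) : Prop :=
  ∃ B : ℕ, ∀ (n : ℕ) (v : ℕ), v ∈ t (pref x n) → v ≤ B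

/-- A set of binary strings is computably enumerable. -/
def CE (S : Set (List Bool)) : Prop :=
  ∃ f : List Bool →. ℕ, Partrec f ∧ S = {b | (f b).Dom}

section DigitLemmas

lemma pref_length (x : ℕ → Bool) (n : ℕ) : (pref x n).length = n := by
  simp [pref]

lemma pref_succ (x : ℕ → Bool) (n : ℕ) : pref x (n+1) = pref x n ++ [x n] := by
  rw [pref, List.ofFn_succ', List.concat_eq_append]
  rfl

lemma sval_eq_range (b : List Bool) :
    sval b = ∑ i ∈ Finset.range b.length,
      (if b.getD i false = true then ((2:ℝ))⁻¹ ^ (i+1) else 0) := by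
  rw [sval, ← Fin.sum_univ_eq_sum_range
    (fun i => if b.getD i false = true then ((2:ℝ))⁻¹ ^ (i+1) else 0) b.length]
  refine Finset.sum_congr rfl fun i _ => ?_
  congr 1
  simp [List.getD_eq_getElem, List.get_eq_getElem, i.isLt]

lemma sval_nil : sval [] = 0 := by simp [sval_eq_range]

lemma sval_concat (c : List Bool) (d : Bool) :
    sval (c ++ [d]) = sval c + (if d = true then ((2:ℝ))⁻¹ ^ (c.length + 1) else 0) := by
  rw [sval_eq_range, sval_eq_range]
  rw [List.length_append, List.length_singleton, Finset.sum_range_succ]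
  congr 1
  · refine Finset.sum_congr rfl fun i hi => ?_
    rw [Finset.mem_range] at hi
    congr 2
    rw [List.getD_eq_getElem _ _ (by simp; omega), List.getD_eq_getElem _ _ hi]
    exact List.getElem_append_left hi
  · congr 2
    rw [List.getD_eq_getElem _ _ (by simp)]
    simp

lemma sval_nonneg (b : List Bool) : 0 ≤ sval b := by
  rw [sval_eq_range]
  refine Finset.sum_nonneg fun i _ => ?_
  split <;> positivity

lemma sval_le (b : List Bool) : sval b ≤ 1 - ((2:ℝ))⁻¹ ^ b.length := by
  have h : ∀ n : ℕ, ∀ b : List Bool, b.length = n → sval b ≤ 1 - ((2:ℝ))⁻¹ ^ n := by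
    intro n
    induction n with
    | zero => intro b hb; rw [List.length_eq_zero_iff.1 hb, sval_nil]; simp
    | succ n ih =>
      intro b hb
      obtain ⟨c, d, rfl⟩ : ∃ c d, b = c ++ [d] := by
        rcases List.eq_nil_or_concat b with rfl | ⟨c, d, rfl⟩
        · simp at hb
        · exact ⟨c, d, by simp [List.concat_eq_append]⟩
      have hc : c.length = n := by simpa using hb
      have := ih c hc
      rw [sval_concat, hc]
      have hp : ((2:ℝ))⁻¹ ^ n = 2 * (2:ℝ)⁻¹ ^ (n+1) := by rw [pow_succ]; ring
      have hpos : (0:ℝ) < 2⁻¹^(n+1) := by positivity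
      split <;> linarith
  exact h b.length b rfl

/-- `2^|b| * sval b` is a natural number. -/
lemma sval_int (b : List Bool) : ∃ K : ℕ, (K : ℝ) = 2 ^ b.length * sval b := by
  induction b using List.reverseRecOn with
  | nil => exact ⟨0, by simp [sval_nil]⟩
  | append_singleton c d ih =>
    obtain ⟨K, hK⟩ := ih
    refine ⟨2 * K + (if d = true then 1 else 0), ?_⟩
    have h1 : (2:ℝ)^(c.length+1) * ((2:ℝ))⁻¹^(c.length+1) = 1 := by
      rw [← mul_pow]; norm_num
    rw [sval_concat, List.length_append, List.length_singleton]
    by_cases hd : d = true <;> simp only [hd, if_true, if_false] <;> push_cast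
    · rw [mul_add, h1, pow_succ]; linear_combination 2 * hK
    · rw [add_zero, add_zero, pow_succ]; linear_combination 2 * hK

end DigitLemmas
section KeyLemmas

lemma pref_zero (x : ℕ → Bool) : pref x 0 = [] := by simp [pref]

/-- Every point of `(0,1)` lies in the dyadic interval given by its first `n` binary digits. -/
lemma binSeq_mem (r : ℝ) (h0 : 0 < r) (h1 : r < 1) (n : ℕ) :
    sval (pref (binSeq r) n) ≤ r ∧ r < sval (pref (binSeq r) n) + ((2:ℝ))⁻¹ ^ n := by
  induction n with
  | zero => simpa [pref_zero, sval_nil] using ⟨le_of_lt h0, h1⟩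
  | succ n ih =>
    obtain ⟨hl, hu⟩ := ih
    set c := pref (binSeq r) n with hc
    obtain ⟨K, hK⟩ := sval_int c
    rw [pref_length] at hK
    have e1 : ((2:ℝ)⁻¹)^(n+1) * 2^(n+1) = 1 := by rw [← mul_pow]; norm_num
    have e2 : ((2:ℝ)⁻¹)^n * 2^(n+1) = 2 := by
      rw [pow_succ, ← mul_assoc, ← mul_pow]; norm_num
    have hpow : (0:ℝ) < 2^(n+1) := by positivity
    have hmul : sval c * 2^(n+1) = 2*K := by linear_combination (-2:ℝ) * hK
    have hmul1 : (sval c + ((2:ℝ)⁻¹)^(n+1)) * 2^(n+1) = 2*K + 1 := by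
      linear_combination (-2:ℝ) * hK + e1
    have hmul2 : (sval c + ((2:ℝ)⁻¹)^n) * 2^(n+1) = 2*K + 2 := by
      linear_combination (-2:ℝ) * hK + e2
    have hF1 : ((2*K : ℤ) : ℝ) ≤ r * 2^(n+1) := by
      push_cast
      rw [← hmul]
      exact mul_le_mul_of_nonneg_right hl hpow.le
    have hF2 : r * 2^(n+1) < ((2*K : ℤ) : ℝ) + 2 := by
      push_cast
      rw [show ((2:ℝ)*K + 2) = (sval c + ((2:ℝ)⁻¹)^n) * 2^(n+1) from hmul2.symm]
      exact mul_lt_mul_of_pos_right hu hpow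
    have hFl : (2*K : ℤ) ≤ ⌊r * 2^(n+1)⌋ := Int.le_floor.2 hF1
    have hFu : ⌊r * 2^(n+1)⌋ < 2*K + 2 := by
      rw [Int.floor_lt]
      push_cast
      push_cast at hF2
      linarith
    have hfloor : (⌊r * 2^(n+1)⌋ : ℝ) ≤ r * 2^(n+1) := Int.floor_le _
    have hfloor2 : r * 2^(n+1) < (⌊r * 2^(n+1)⌋ : ℝ) + 1 := Int.lt_floor_add_one _
    have hbs : binSeq r n = decide (⌊r * 2^(n+1)⌋ % 2 = 1) := rfl
    rw [pref_succ, ← hc, sval_concat, pref_length]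
    rcases (by omega : ⌊r * 2^(n+1)⌋ = 2*K ∨ ⌊r * 2^(n+1)⌋ = 2*K + 1) with hE | hE
    · have hd : binSeq r n = false := by
        rw [hbs, hE]; simp only [decide_eq_false_iff_not]; omega
      rw [hd]
      simp only [Bool.false_eq_true, if_false, add_zero]
      refine ⟨hl, ?_⟩
      rw [hE] at hfloor2
      push_cast at hfloor2
      refine (mul_lt_mul_iff_of_pos_right hpow).1 ?_
      rw [hmul1]
      linarith
    · have hd : binSeq r n = true := by
        rw [hbs, hE]; simp only [decide_eq_true_eq]; omega
      rw [hd]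
      simp only [if_true]
      constructor
      · rw [hE] at hfloor
        push_cast at hfloor
        refine (mul_le_mul_iff_of_pos_right hpow).1 ?_
        rw [hmul1]
        linarith
      · have hpn : ((2:ℝ)⁻¹)^n = ((2:ℝ)⁻¹)^(n+1) + ((2:ℝ)⁻¹)^(n+1) := by
          rw [pow_succ]; ring
        linarith

/-- Conversely, if `r ∈ (0,1)` lies in the dyadic interval of `b`, its digits begin with `b`. -/
lemma digits_eq : ∀ (n : ℕ) (b : List Bool), b.length = n → ∀ r : ℝ, 0 < r → r < 1 →
    sval b ≤ r → r < sval b + ((2:ℝ))⁻¹ ^ n → pref (binSeq r) n = b := by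
  intro n
  induction n with
  | zero =>
    intro b hb r _ _ _ _
    rw [List.length_eq_zero_iff.1 hb, pref_zero]
  | succ n ih =>
    intro b hb r h0 h1 hl hu
    obtain ⟨c, d, rfl⟩ : ∃ c d, b = c ++ [d] := by
      rcases List.eq_nil_or_concat b with rfl | ⟨c, d, rfl⟩
      · simp at hb
      · exact ⟨c, d, by simp [List.concat_eq_append]⟩
    have hcl : c.length = n := by simpa using hb
    have hsv := sval_concat c d
    rw [hcl] at hsv
    have hite1 : (0:ℝ) ≤ (if d = true then ((2:ℝ))⁻¹ ^ (n + 1) else 0) := by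
      split <;> positivity
    have hite2 : (if d = true then ((2:ℝ))⁻¹ ^ (n + 1) else 0) ≤ ((2:ℝ))⁻¹ ^ (n + 1) := by
      split
      · exact le_refl _
      · positivity
    have hpn : ((2:ℝ)⁻¹)^n = ((2:ℝ)⁻¹)^(n+1) + ((2:ℝ)⁻¹)^(n+1) := by rw [pow_succ]; ring
    have hc : pref (binSeq r) n = c := by
      refine ih c hcl r h0 h1 (by linarith) (by linarith)
    obtain ⟨K, hK⟩ := sval_int c
    rw [hcl] at hK
    have e1 : ((2:ℝ)⁻¹)^(n+1) * 2^(n+1) = 1 := by rw [← mul_pow]; norm_num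
    have hpow : (0:ℝ) < 2^(n+1) := by positivity
    have hmul : sval c * 2^(n+1) = 2*K := by linear_combination (-2:ℝ) * hK
    have hmul1 : (sval c + ((2:ℝ)⁻¹)^(n+1)) * 2^(n+1) = 2*K + 1 := by
      linear_combination (-2:ℝ) * hK + e1
    have hbs : binSeq r n = decide (⌊r * 2^(n+1)⌋ % 2 = 1) := rfl
    rw [pref_succ, hc]
    have hd : binSeq r n = d := by
      cases d with
      | false =>
        simp only [Bool.false_eq_true, if_false, add_zero] at hsv
        rw [hsv] at hl hu
        have hE : ⌊r * 2^(n+1)⌋ = 2*K := by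
          rw [Int.floor_eq_iff]
          constructor
          · push_cast
            rw [← hmul]
            exact mul_le_mul_of_nonneg_right hl hpow.le
          · push_cast
            have := mul_lt_mul_of_pos_right hu hpow
            rw [hmul1] at this
            linarith
        rw [hbs, hE]
        simp only [decide_eq_false_iff_not]; omega
      | true =>
        simp only [if_true] at hsv
        rw [hsv] at hl hu
        have hE : ⌊r * 2^(n+1)⌋ = 2*K + 1 := by
          rw [Int.floor_eq_iff]
          constructor
          · push_cast
            rw [← hmul1]
            exact mul_le_mul_of_nonneg_right hl hpow.le
          · push_cast
            have := mul_lt_mul_of_pos_right hu hpow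
            have hmul2 : (sval c + ((2:ℝ)⁻¹)^(n+1) + ((2:ℝ)⁻¹)^(n+1)) * 2^(n+1) = 2*K + 2 := by
              linear_combination (-2:ℝ) * hK + 2 * e1
            rw [hmul2] at this
            linarith
        rw [hbs, hE]
        simp only [decide_eq_true_eq]; omega
    rw [hd]

end KeyLemmas
section MeasureLemmas

lemma measurable_binSeq : Measurable binSeq := by
  apply measurable_pi_lambda
  intro n
  have h1 : Measurable fun r : ℝ => ⌊r * 2^(n+1)⌋ :=
    Int.measurable_floor.comp (measurable_id.mul_const _)
  exact (measurable_from_top (f := fun k : ℤ => decide (k % 2 = 1))).comp h1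

lemma pref_eq_iff (x : ℕ → Bool) (b : List Bool) :
    pref x b.length = b ↔ ∀ i < b.length, x i = b.getD i false := by
  constructor
  · intro h i hi
    have : (pref x b.length).getD i false = b.getD i false := by rw [h]
    rw [List.getD_eq_getElem _ _ (by rw [pref_length]; exact hi)] at this
    rw [← this]
    simp [pref]
  · intro h
    apply List.ext_getElem (by rw [pref_length])
    intro i h1 h2
    rw [pref_length] at h1
    simp only [pref, List.getElem_ofFn]
    rw [h i h1, List.getD_eq_getElem _ _ h2]

lemma measurableSet_cyl_singleton (b : List Bool) : MeasurableSet (cyl {b}) := by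
  have h : cyl {b} = ⋂ i ∈ Finset.range b.length, {x : ℕ → Bool | x i = b.getD i false} := by
    ext x
    simp only [cyl, Set.mem_setOf_eq, Set.mem_singleton_iff, Set.mem_iInter, Finset.mem_range]
    constructor
    · rintro ⟨a, rfl, ha⟩
      exact (pref_eq_iff x a).1 ha
    · intro h
      exact ⟨b, rfl, (pref_eq_iff x b).2 h⟩
  rw [h]
  refine MeasurableSet.biInter (Finset.range b.length).countable_toSet fun i _ => ?_
  show MeasurableSet ((fun x : ℕ → Bool => x i) ⁻¹' {b.getD i false})
  exact measurable_pi_apply i (measurableSet_singleton _)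

lemma cyl_eq_biUnion (S : Set (List Bool)) : cyl S = ⋃ b ∈ S, cyl {b} := by
  ext x
  simp only [cyl, Set.mem_setOf_eq, Set.mem_iUnion, Set.mem_singleton_iff]
  constructor
  · rintro ⟨b, hb, h⟩
    exact ⟨b, hb, b, rfl, h⟩
  · rintro ⟨b, hb, a, rfl, h⟩
    exact ⟨a, hb, h⟩

lemma measurableSet_cyl (S : Set (List Bool)) : MeasurableSet (cyl S) := by
  rw [cyl_eq_biUnion]
  exact MeasurableSet.biUnion S.to_countable fun b _ => measurableSet_cyl_singleton b

lemma cyl_mono {S T : Set (List Bool)} (h : S ⊆ T) : cyl S ⊆ cyl T := by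
  rintro x ⟨b, hb, hx⟩
  exact ⟨b, h hb, hx⟩

lemma ofReal_half_pow (n : ℕ) : ENNReal.ofReal (((2:ℝ))⁻¹ ^ n) = ((2:ℝ≥0∞))⁻¹ ^ n := by
  rw [ENNReal.ofReal_pow (by norm_num)]
  congr 1
  rw [ENNReal.ofReal_inv_of_pos (by norm_num)]
  norm_num

lemma coin_cyl_singleton (b : List Bool) :
    coin (cyl {b}) = ((2:ℝ≥0∞))⁻¹ ^ b.length := by
  set n := b.length with hn
  rw [coin, Measure.map_apply measurable_binSeq (measurableSet_cyl_singleton b),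
    Measure.restrict_apply (measurable_binSeq (measurableSet_cyl_singleton b))]
  have hub : sval b + ((2:ℝ))⁻¹ ^ n ≤ 1 := by
    have := sval_le b
    rw [← hn] at this
    linarith
  have hlb : (0:ℝ) ≤ sval b := sval_nonneg b
  have hsub1 : binSeq ⁻¹' cyl {b} ∩ Set.Ioc 0 1 ⊆
      Set.Ico (sval b) (sval b + ((2:ℝ))⁻¹ ^ n) ∪ {1} := by
    rintro r ⟨hr, hr0, hr1⟩
    rcases eq_or_lt_of_le hr1 with rfl | hr1'
    · exact Or.inr rfl
    · left
      obtain ⟨a, ha, hpa⟩ := hr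
      rw [Set.mem_singleton_iff] at ha
      subst ha
      have := binSeq_mem r hr0 hr1' n
      rw [hpa] at this
      exact ⟨this.1, this.2⟩
  have hsub2 : Set.Ioo (sval b) (sval b + ((2:ℝ))⁻¹ ^ n) ⊆
      binSeq ⁻¹' cyl {b} ∩ Set.Ioc 0 1 := by
    rintro r ⟨h1, h2⟩
    have hr0 : 0 < r := lt_of_le_of_lt hlb h1
    have hr1 : r < 1 := lt_of_lt_of_le h2 hub
    refine ⟨⟨b, rfl, ?_⟩, hr0, le_of_lt hr1⟩
    exact digits_eq n b hn.symm r hr0 hr1 (le_of_lt h1) h2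
  have hle : volume (binSeq ⁻¹' cyl {b} ∩ Set.Ioc 0 1) ≤ ENNReal.ofReal (((2:ℝ))⁻¹ ^ n) := by
    calc volume (binSeq ⁻¹' cyl {b} ∩ Set.Ioc 0 1)
        ≤ volume (Set.Ico (sval b) (sval b + ((2:ℝ))⁻¹ ^ n) ∪ {1}) := measure_mono hsub1
      _ ≤ volume (Set.Ico (sval b) (sval b + ((2:ℝ))⁻¹ ^ n)) + volume {1} := measure_union_le _ _
      _ = ENNReal.ofReal (((2:ℝ))⁻¹ ^ n) := by
          rw [Real.volume_Ico, Real.volume_singleton, add_zero]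
          congr 1
          ring
  have hge : ENNReal.ofReal (((2:ℝ))⁻¹ ^ n) ≤ volume (binSeq ⁻¹' cyl {b} ∩ Set.Ioc 0 1) := by
    calc ENNReal.ofReal (((2:ℝ))⁻¹ ^ n)
        = volume (Set.Ioo (sval b) (sval b + ((2:ℝ))⁻¹ ^ n)) := by
          rw [Real.volume_Ioo]
          congr 1
          ring
      _ ≤ volume (binSeq ⁻¹' cyl {b} ∩ Set.Ioc 0 1) := measure_mono hsub2
  rw [le_antisymm hle hge, ofReal_half_pow]

lemma pref_pref (x : ℕ → Bool) {m n : ℕ} (h : m ≤ n) : pref x m = (pref x n).take m := by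
  apply List.ext_getElem
  · rw [pref_length, List.length_take, pref_length]
    omega
  · intro i h1 h2
    rw [List.getElem_take]
    simp [pref]

lemma cyl_singleton_subset {a b : List Bool} (h : a <+: b) : cyl {b} ⊆ cyl {a} := by
  rintro x ⟨c, hc, hx⟩
  rw [Set.mem_singleton_iff] at hc
  subst hc
  refine ⟨a, rfl, ?_⟩
  obtain ⟨t, rfl⟩ := h
  have hml : a.length ≤ (a ++ t).length := by simp
  rw [pref_pref x hml, hx]
  exact List.take_left

lemma cyl_disjoint {a b : List Bool} (hab : ¬ a <+: b) (hba : ¬ b <+: a) :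
    Disjoint (cyl {a}) (cyl {b}) := by
  rw [Set.disjoint_left]
  rintro x ⟨c, hc, hxa⟩ ⟨d, hd, hxb⟩
  rw [Set.mem_singleton_iff] at hc hd
  rw [hc] at hxa
  rw [hd] at hxb
  rcases le_total a.length b.length with h | h
  · apply hab
    have h2 : pref x a.length = (pref x b.length).take a.length := pref_pref x h
    rw [hxa, hxb] at h2
    rw [h2]
    exact List.take_prefix _ _
  · apply hba
    have h2 : pref x b.length = (pref x a.length).take b.length := pref_pref x h
    rw [hxa, hxb] at h2
    rw [h2]
    exact List.take_prefix _ _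

end MeasureLemmas
section OkbLemmas

/-- Boolean universal quantifier over a list, by `foldr` (convenient for `Primrec`). -/
def allb {α : Type*} (p : α → Bool) (L : List α) : Bool := L.foldr (fun a r => p a && r) true

lemma allb_iff {α : Type*} (p : α → Bool) (L : List α) :
    allb p L = true ↔ ∀ a ∈ L, p a = true := by
  induction L with
  | nil => simp [allb]
  | cons a L ih => simp [allb, List.foldr_cons]; rw [show (List.foldr (fun a r => p a && r) true L) = allb p L from rfl, ih]; tauto

/-- Boolean prefix test. -/
def pfxb (a b : List Bool) : Bool :=
  decide (a.length ≤ b.length) &&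
    allb (fun i => decide (a.getD i false = b.getD i false)) (List.range a.length)

lemma pfxb_iff (a b : List Bool) : pfxb a b = true ↔ a <+: b := by
  rw [pfxb, Bool.and_eq_true, decide_eq_true_eq, allb_iff]
  simp only [decide_eq_true_eq]
  constructor
  · rintro ⟨hlen, hpt⟩
    have : a = b.take a.length := by
      apply List.ext_getElem (by rw [List.length_take]; omega)
      intro i h1 h2
      rw [List.getElem_take]
      have := hpt i (List.mem_range.2 h1)
      rw [List.getD_eq_getElem _ _ h1, List.getD_eq_getElem _ _ (by omega : i < b.length)] at this
      exact this
    rw [this]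
    exact List.take_prefix _ _
  · rintro ⟨t, rfl⟩
    refine ⟨by simp, fun i hi => ?_⟩
    rw [List.mem_range] at hi
    rw [List.getD_eq_getElem _ _ hi,
      List.getD_eq_getElem _ _ (by rw [List.length_append]; omega)]
    exact (List.getElem_append_left hi).symm

/-- Boolean list membership test. -/
def memb (b : List Bool) (L : List (List Bool)) : Bool := L.foldr (fun a r => decide (a = b) || r) false

lemma memb_iff (b : List Bool) (L : List (List Bool)) : memb b L = true ↔ b ∈ L := by
  induction L with
  | nil => simp [memb]
  | cons a L ih =>
    simp only [memb, List.foldr_cons, Bool.or_eq_true, decide_eq_true_eq, List.mem_cons]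
    rw [show (List.foldr (fun a r => decide (a = b) || r) false L) = memb b L from rfl, ih]
    tauto

/-- Boolean test that `b` is minimal (has no proper prefix) in `L`. -/
def minb (L : List (List Bool)) (b : List Bool) : Bool :=
  allb (fun a => !(pfxb a b) || decide (a = b)) L

lemma minb_iff (L : List (List Bool)) (b : List Bool) :
    minb L b = true ↔ ∀ a ∈ L, a <+: b → a = b := by
  rw [minb, allb_iff]
  constructor
  · intro h a ha hab
    have := h a ha
    rw [Bool.or_eq_true, Bool.not_eq_true', decide_eq_true_eq] at this
    rcases this with h' | h'
    · rw [← pfxb_iff a b] at hab; rw [hab] at h'; cases h'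
    · exact h'
  · intro h a ha
    rw [Bool.or_eq_true, Bool.not_eq_true', decide_eq_true_eq]
    by_cases hp : a <+: b
    · exact Or.inr (h a ha hp)
    · left; rw [← Bool.not_eq_true, pfxb_iff]; exact hp

def lsum (L : List ℕ) : ℕ := L.foldr (· + ·) 0

lemma lsum_eq (L : List ℕ) : lsum L = L.sum := by
  induction L with
  | nil => rfl
  | cons a L ih => simp only [lsum, List.foldr_cons, List.sum_cons]; exact congrArg (a + ·) ih

def wtsum (D : ℕ) (L : List (List Bool)) : ℕ :=
  lsum (L.map (fun b => bif minb L b then 2^(D - b.length) else 0))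

def Dof (m : ℕ) (L : List (List Bool)) : ℕ := m + lsum (L.map List.length)

/-- The computable check that the cylinder measure of (the set of strings in) `L`
is at most `2⁻¹ ^ m`. -/
def okb (m : ℕ) (L : List (List Bool)) : Bool :=
  decide (wtsum (Dof m L) L ≤ 2^(Dof m L - m))

/-- every element of a list of strings has a minimal prefix in the list. -/
lemma exists_min (L : List (List Bool)) : ∀ b ∈ L, ∃ a ∈ L,
    (∀ c ∈ L, c <+: a → c = a) ∧ a <+: b := by
  suffices h : ∀ n, ∀ b ∈ L, b.length ≤ n → ∃ a ∈ L, (∀ c ∈ L, c <+: a → c = a) ∧ a <+: b by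
    intro b hb; exact h b.length b hb le_rfl
  intro n
  induction n with
  | zero =>
    intro b hb hlen
    refine ⟨b, hb, fun c hc hcb => ?_, List.prefix_refl b⟩
    have := hcb.length_le
    exact hcb.eq_of_length (by omega)
  | succ n ih =>
    intro b hb hlen
    by_cases hmin : ∀ c ∈ L, c <+: b → c = b
    · exact ⟨b, hb, hmin, List.prefix_refl b⟩
    · push_neg at hmin
      obtain ⟨c, hc, hcb, hne⟩ := hmin
      have hlt : c.length < b.length := by
        rcases lt_or_eq_of_le hcb.length_le with h | h
        · exact h
        · exact absurd (hcb.eq_of_length h) hne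
      obtain ⟨a, ha, hamin, hac⟩ := ih c hc (by omega)
      exact ⟨a, ha, hamin, hac.trans hcb⟩

lemma cyl_list_min (L : List (List Bool)) :
    cyl {b | b ∈ L} = cyl {b | b ∈ L.filter (fun b => minb L b)} := by
  apply le_antisymm
  · rw [cyl_eq_biUnion {b | b ∈ L}]
    refine Set.iUnion₂_subset fun b hb => ?_
    obtain ⟨a, ha, hamin, hab⟩ := exists_min L b hb
    refine (cyl_singleton_subset hab).trans (cyl_mono ?_)
    intro c hc
    rw [Set.mem_singleton_iff] at hc
    rw [hc]
    simp only [Set.mem_setOf_eq, List.mem_filter]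
    exact ⟨ha, (minb_iff L a).2 hamin⟩
  · exact cyl_mono fun b hb => (List.mem_filter.1 hb).1

lemma coin_cyl_list (L : List (List Bool)) :
    coin (cyl {b | b ∈ L}) =
      ∑ b ∈ (L.filter (fun b => minb L b)).toFinset, ((2:ℝ≥0∞))⁻¹ ^ b.length := by
  rw [cyl_list_min]
  set F := (L.filter (fun b => minb L b)).toFinset with hF
  have hset : {b | b ∈ L.filter (fun b => minb L b)} = (↑F : Set (List Bool)) := by
    ext b; simp [hF]
  rw [hset, cyl_eq_biUnion, Finset.set_biUnion_coe]
  have hdisj : (↑F : Set (List Bool)).PairwiseDisjoint (fun b => cyl {b}) := by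
    intro a ha b hb hne
    simp only [hF, Finset.coe_sort_coe, List.mem_toFinset, List.mem_filter,
      Finset.mem_coe] at ha hb
    have hma := (minb_iff L a).1 ha.2
    have hmb := (minb_iff L b).1 hb.2
    apply cyl_disjoint
    · intro hab; exact hne (hmb a ha.1 hab)
    · intro hba; exact hne (hma b hb.1 hba).symm
  rw [measure_biUnion_finset hdisj fun b _ => measurableSet_cyl_singleton b]
  exact Finset.sum_congr rfl fun b _ => coin_cyl_singleton b

end OkbLemmas
section OkbIff

lemma wtsum_eq_sum (D : ℕ) (L : List (List Bool)) (hL : L.Nodup) :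
    wtsum D L = ∑ b ∈ (L.filter (fun b => minb L b)).toFinset, 2^(D - b.length) := by
  have h1 : wtsum D L = (L.map (fun b => bif minb L b then 2^(D - b.length) else 0)).sum := by
    rw [wtsum, lsum_eq]
  rw [h1, ← List.sum_toFinset _ hL]
  have h2 : (L.filter (fun b => minb L b)).toFinset =
      L.toFinset.filter (fun b => minb L b = true) := by
    ext b; simp [List.mem_filter]
  rw [h2, Finset.sum_filter]
  refine Finset.sum_congr rfl fun b _ => ?_
  rw [Bool.cond_eq_ite]

lemma half_pow_mul (l D : ℕ) (h : l ≤ D) :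
    ((2:ℝ≥0∞))⁻¹ ^ l * 2^D = 2^(D-l) := by
  have h1 : ((2:ℝ≥0∞))^D = 2^l * 2^(D-l) := by rw [← pow_add]; congr 1; omega
  rw [h1, ← mul_assoc, ← mul_pow, ENNReal.inv_mul_cancel (by norm_num) (by norm_num),
    one_pow, one_mul]

lemma okb_iff (m : ℕ) (L : List (List Bool)) (hL : L.Nodup) :
    okb m L = true ↔ coin (cyl {b | b ∈ L}) ≤ ((2:ℝ≥0∞))⁻¹ ^ m := by
  rw [okb, decide_eq_true_eq, coin_cyl_list]
  set D := Dof m L with hD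
  set F := (L.filter (fun b => minb L b)).toFinset with hF
  have hmD : m ≤ D := Nat.le_add_right _ _
  have hlen : ∀ b ∈ F, b.length ≤ D := by
    intro b hb
    simp only [hF, List.mem_toFinset, List.mem_filter] at hb
    have h1 : b.length ≤ lsum (L.map List.length) := by
      rw [lsum_eq]
      exact List.single_le_sum (fun x _ => Nat.zero_le x) _
        (List.mem_map_of_mem (f := List.length) hb.1)
    rw [hD, Dof]
    omega
  have h2 : ((2:ℝ≥0∞))^D ≠ 0 := pow_ne_zero _ (by norm_num)
  have h3 : ((2:ℝ≥0∞))^D ≠ ⊤ := ENNReal.pow_ne_top (by norm_num)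
  rw [← ENNReal.mul_le_mul_iff_left h2 h3, Finset.sum_mul]
  have hterm : ∀ b ∈ F, ((2:ℝ≥0∞))⁻¹^b.length * 2^D = ((2^(D - b.length) : ℕ) : ℝ≥0∞) := by
    intro b hb
    rw [half_pow_mul _ _ (hlen b hb)]
    push_cast
    rfl
  rw [Finset.sum_congr rfl hterm, ← Nat.cast_sum, half_pow_mul m _ hmD, ← wtsum_eq_sum _ _ hL]
  rw [show ((2:ℝ≥0∞))^(D - m) = ((2^(D - m):ℕ):ℝ≥0∞) by push_cast; rfl]
  exact (Nat.cast_le (α := ℝ≥0∞)).symm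

end OkbIff
section Enumeration

open Nat.Partrec (Code)

/-- Enumeration of the `c`-th c.e. set of strings: at time `t = ⟨s, k⟩`, output the string
coded by `k` if `evaln s c k` halts. -/
def enum (c : Code) (t : ℕ) : Option (List Bool) :=
  (Encodable.decode (α := List Bool) t.unpair.2).bind fun b =>
    if Encodable.encode b = t.unpair.2 ∧
        (Nat.Partrec.Code.evaln t.unpair.1 c t.unpair.2).isSome = true
    then some b else none

lemma enum_sound {c : Code} {t : ℕ} {b : List Bool}
    (h : enum c t = some b) : (c.eval (Encodable.encode b)).Dom := by
  rw [enum] at h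
  obtain ⟨b', hb', hf⟩ := Option.bind_eq_some_iff.1 h
  split at hf
  · rename_i hc
    obtain rfl : b' = b := Option.some_injective _ hf
    obtain ⟨henc, hev⟩ := hc
    obtain ⟨v, hv⟩ := Option.isSome_iff_exists.1 hev
    have hvm : v ∈ Nat.Partrec.Code.evaln t.unpair.1 c t.unpair.2 := hv
    have := Nat.Partrec.Code.evaln_sound hvm
    rw [henc]
    exact Part.dom_iff_mem.2 ⟨v, this⟩
  · exact absurd hf (by simp)

lemma enum_complete {c : Code} {b : List Bool}
    (h : (c.eval (Encodable.encode b)).Dom) : ∃ t, enum c t = some b := by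
  obtain ⟨v, hv⟩ := Part.dom_iff_mem.1 h
  obtain ⟨s, hs⟩ := Nat.Partrec.Code.evaln_complete.1 hv
  refine ⟨Nat.pair s (Encodable.encode b), ?_⟩
  rw [enum]
  simp only [Nat.unpair_pair, Encodable.encodek, Option.bind_some]
  rw [if_pos ⟨trivial, Option.isSome_iff_exists.2 ⟨v, hs⟩⟩]

/-- `enum` restricted to first occurrences, so that each string is listed at most once. -/
def enum1 (c : Code) (t : ℕ) : Option (List Bool) :=
  (enum c t).bind fun b =>
    if allb (fun t' => decide (¬ enum c t' = some b)) (List.range t) = true then some b else none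

lemma enum1_eq_some {c : Code} {t : ℕ} {b : List Bool} :
    enum1 c t = some b ↔ enum c t = some b ∧ ∀ t' < t, enum c t' ≠ some b := by
  rw [enum1, Option.bind_eq_some_iff]
  constructor
  · rintro ⟨b', hb', hf⟩
    split at hf
    · rename_i hc
      obtain rfl : b' = b := Option.some_injective _ hf
      refine ⟨hb', fun t' ht' => ?_⟩
      have := (allb_iff _ _).1 hc t' (List.mem_range.2 ht')
      simpa using this
    · exact absurd hf (by simp)
  · rintro ⟨hb, hfresh⟩
    refine ⟨b, hb, ?_⟩
    rw [if_pos]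
    apply (allb_iff _ _).2
    intro t' ht'
    simpa using hfresh t' (List.mem_range.1 ht')

/-- The finite list of all strings enumerated into `W c` by time `t` (without repetition). -/
def stage (c : Code) (t : ℕ) : List (List Bool) := (List.range (t+1)).filterMap (enum1 c)

lemma stage_mem {c : Code} {t : ℕ} {b : List Bool} :
    b ∈ stage c t ↔ ∃ u ≤ t, enum1 c u = some b := by
  simp [stage, List.mem_filterMap, List.mem_range, Nat.lt_succ_iff]

lemma stage_nodup (c : Code) (t : ℕ) : (stage c t).Nodup := by
  apply List.Nodup.filterMap _ List.nodup_range
  intro a a' b hb hb'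
  rw [Option.mem_def, enum1_eq_some] at hb hb'
  rcases lt_trichotomy a a' with h | h | h
  · exact absurd hb.1 (hb'.2 a h)
  · exact h
  · exact absurd hb'.1 (hb.2 a' h)

lemma stage_mono {c : Code} {t t' : ℕ} (h : t ≤ t') :
    ∀ b ∈ stage c t, b ∈ stage c t' := by
  intro b hb
  rw [stage_mem] at hb ⊢
  obtain ⟨u, hu, he⟩ := hb
  exact ⟨u, hu.trans h, he⟩

lemma stage_sound {c : Code} {t : ℕ} {b : List Bool} (h : b ∈ stage c t) :
    (c.eval (Encodable.encode b)).Dom := by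
  rw [stage_mem] at h
  obtain ⟨u, _, he⟩ := h
  exact enum_sound (enum1_eq_some.1 he).1

lemma stage_complete {c : Code} {b : List Bool} (h : (c.eval (Encodable.encode b)).Dom) :
    ∃ t, b ∈ stage c t := by
  obtain ⟨t0, ht0⟩ := enum_complete h
  have hex : ∃ t, enum c t = some b := ⟨t0, ht0⟩
  classical
  refine ⟨Nat.find hex, ?_⟩
  rw [stage_mem]
  exact ⟨Nat.find hex, le_refl _,
    enum1_eq_some.2 ⟨Nat.find_spec hex, fun t' ht' => Nat.find_min hex ht'⟩⟩

/-- The `m`-trimmed version of the `c`-th c.e. set of strings. -/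
def TSet (c : Code) (m : ℕ) : Set (List Bool) :=
  {b | ∃ t, b ∈ stage c t ∧ okb m (stage c t) = true}

lemma TSet_measure (c : Code) (m : ℕ) : coin (cyl (TSet c m)) ≤ ((2:ℝ≥0∞))⁻¹ ^ m := by
  set A : ℕ → Set (ℕ → Bool) :=
    fun t => if okb m (stage c t) = true then cyl {b | b ∈ stage c t} else ∅ with hA
  have hApos : ∀ t, okb m (stage c t) = true → A t = cyl {b | b ∈ stage c t} := by
    intro t h; simp only [hA]; rw [if_pos h]
  have hAneg : ∀ t, ¬ okb m (stage c t) = true → A t = ∅ := by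
    intro t h; simp only [hA]; rw [if_neg h]
  have hcyl : cyl (TSet c m) = ⋃ t, A t := by
    ext x
    constructor
    · rintro ⟨b, ⟨t, hbt, hok⟩, hx⟩
      refine Set.mem_iUnion.2 ⟨t, ?_⟩
      rw [hApos t hok]
      exact ⟨b, hbt, hx⟩
    · intro hx
      obtain ⟨t, ht⟩ := Set.mem_iUnion.1 hx
      by_cases hok : okb m (stage c t) = true
      · rw [hApos t hok] at ht
        obtain ⟨b, hb, hx'⟩ := ht
        exact ⟨b, ⟨t, hb, hok⟩, hx'⟩
      · rw [hAneg t hok] at ht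
        cases ht
  have hsub : ∀ t t', t ≤ t' → okb m (stage c t') = true → A t ⊆ A t' := by
    intro t t' h hok
    by_cases hok2 : okb m (stage c t) = true
    · rw [hApos t hok2, hApos t' hok]
      exact cyl_mono (fun b hb => stage_mono h b hb)
    · rw [hAneg t hok2]
      exact Set.empty_subset _
  have hdir : Directed (· ⊆ ·) A := by
    intro t t'
    rcases le_total t t' with h | h
    · by_cases hok : okb m (stage c t') = true
      · exact ⟨t', hsub t t' h hok, subset_refl _⟩
      · exact ⟨t, subset_refl _, by rw [hAneg t' hok]; exact Set.empty_subset _⟩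
    · by_cases hok : okb m (stage c t) = true
      · exact ⟨t, subset_refl _, hsub t' t h hok⟩
      · exact ⟨t', by rw [hAneg t hok]; exact Set.empty_subset _, subset_refl _⟩
  rw [hcyl, Directed.measure_iUnion hdir]
  refine iSup_le fun t => ?_
  by_cases hok : okb m (stage c t) = true
  · rw [hApos t hok]
    exact (okb_iff m _ (stage_nodup c t)).1 hok
  · rw [hAneg t hok]
    simp

lemma TSet_full {c : Code} {m : ℕ}
    (h : coin (cyl {b | (c.eval (Encodable.encode b)).Dom}) ≤ ((2:ℝ≥0∞))⁻¹ ^ m) :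
    TSet c m = {b | (c.eval (Encodable.encode b)).Dom} := by
  apply Set.Subset.antisymm
  · rintro b ⟨t, hbt, _⟩
    exact stage_sound hbt
  · intro b hb
    obtain ⟨t, hbt⟩ := stage_complete hb
    refine ⟨t, hbt, ?_⟩
    rw [okb_iff m _ (stage_nodup c t)]
    refine le_trans (measure_mono (cyl_mono ?_)) h
    intro b' hb'
    exact stage_sound hb'

/-- The master decidable search predicate for the universal test. -/
def stepN (z w : ℕ) : Bool :=
  Option.casesOn (Encodable.decode (α := List Bool) z.unpair.2) false fun b =>
    Option.casesOn (Nat.Partrec.Code.evaln w.unpair.2.unpair.1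
        (Denumerable.ofNat Code w.unpair.1) (w.unpair.1 + z.unpair.1 + 1)) false fun v =>
      memb b (stage (Denumerable.ofNat Code v) w.unpair.2.unpair.2) &&
        okb (w.unpair.1 + z.unpair.1 + 1) (stage (Denumerable.ofNat Code v) w.unpair.2.unpair.2)

/-- The `n`-th level of the universal Martin-Löf test. -/
def USet (n : ℕ) : Set (List Bool) :=
  {b | ∃ w, stepN (Nat.pair n (Encodable.encode b)) w = true}

lemma stepN_iff {n w : ℕ} {b : List Bool} :
    stepN (Nat.pair n (Encodable.encode b)) w = true ↔
    ∃ v, Nat.Partrec.Code.evaln w.unpair.2.unpair.1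
        (Denumerable.ofNat Code w.unpair.1) (w.unpair.1 + n + 1) = some v ∧
      b ∈ stage (Denumerable.ofNat Code v) w.unpair.2.unpair.2 ∧
      okb (w.unpair.1 + n + 1) (stage (Denumerable.ofNat Code v) w.unpair.2.unpair.2) = true := by
  rw [stepN]
  simp only [Nat.unpair_pair, Encodable.encodek]
  rcases hev : Nat.Partrec.Code.evaln w.unpair.2.unpair.1
      (Denumerable.ofNat Code w.unpair.1) (w.unpair.1 + n + 1) with _ | v
  · simp
  · simp only [Bool.and_eq_true, memb_iff]
    constructor
    · rintro ⟨h1, h2⟩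
      exact ⟨v, rfl, h1, h2⟩
    · rintro ⟨v', hv', h1, h2⟩
      obtain rfl : v' = v := (Option.some_injective _ hv').symm
      exact ⟨h1, h2⟩

def WSlice (n e : ℕ) : Set (List Bool) :=
  {b | ∃ v, v ∈ (Denumerable.ofNat Code e).eval (e+n+1) ∧
    b ∈ TSet (Denumerable.ofNat Code v) (e+n+1)}

lemma USet_eq (n : ℕ) : USet n = ⋃ e, WSlice n e := by
  ext b
  simp only [USet, Set.mem_iUnion, Set.mem_setOf_eq, WSlice, TSet]
  constructor
  · rintro ⟨w, hw⟩
    rw [stepN_iff] at hw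
    obtain ⟨v, hev, hstage, hok⟩ := hw
    exact ⟨w.unpair.1, v, Nat.Partrec.Code.evaln_sound (Option.mem_def.2 hev),
      w.unpair.2.unpair.2, hstage, hok⟩
  · rintro ⟨e, v, hv, t, hstage, hok⟩
    obtain ⟨s, hs⟩ := Nat.Partrec.Code.evaln_complete.1 hv
    refine ⟨Nat.pair e (Nat.pair s t), ?_⟩
    rw [stepN_iff]
    simp only [Nat.unpair_pair]
    exact ⟨v, Option.mem_def.1 hs, hstage, hok⟩

lemma cyl_empty : cyl (∅ : Set (List Bool)) = ∅ := by
  ext x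
  simp [cyl]

lemma WSlice_measure (n e : ℕ) : coin (cyl (WSlice n e)) ≤ ((2:ℝ≥0∞))⁻¹ ^ (e+n+1) := by
  by_cases h : ((Denumerable.ofNat Code e).eval (e+n+1)).Dom
  · obtain ⟨v, hv⟩ := Part.dom_iff_mem.1 h
    have heq : WSlice n e = TSet (Denumerable.ofNat Code v) (e+n+1) := by
      ext b
      simp only [WSlice, Set.mem_setOf_eq]
      constructor
      · rintro ⟨v', hv', hb⟩
        rwa [Part.mem_unique hv' hv] at hb
      · intro hb
        exact ⟨v, hv, hb⟩
    rw [heq]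
    exact TSet_measure _ _
  · have heq : WSlice n e = ∅ := by
      ext b
      simp only [WSlice, Set.mem_setOf_eq, Set.mem_empty_iff_false, iff_false]
      rintro ⟨v, hv, -⟩
      exact h (Part.dom_iff_mem.2 ⟨v, hv⟩)
    rw [heq, cyl_empty]
    simp

lemma cyl_iUnion {ι : Sort*} (S : ι → Set (List Bool)) :
    cyl (⋃ i, S i) = ⋃ i, cyl (S i) := by
  ext x
  simp only [cyl, Set.mem_iUnion, Set.mem_setOf_eq]
  constructor
  · rintro ⟨b, ⟨i, hi⟩, hx⟩
    exact ⟨i, b, hi, hx⟩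
  · rintro ⟨i, b, hb, hx⟩
    exact ⟨b, ⟨i, hb⟩, hx⟩

lemma USet_measure (n : ℕ) : coin (cyl (USet n)) ≤ ((2:ℝ≥0∞))⁻¹ ^ n := by
  rw [USet_eq, cyl_iUnion]
  refine le_trans (measure_iUnion_le _) ?_
  refine le_trans (ENNReal.tsum_le_tsum fun e => WSlice_measure n e) ?_
  have hstep : ∀ e : ℕ, ((2:ℝ≥0∞))⁻¹ ^ (e+n+1) = ((2:ℝ≥0∞))⁻¹^(n+1) * ((2:ℝ≥0∞))⁻¹^e := by
    intro e
    rw [← pow_add]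
    congr 1
    omega
  calc ∑' e:ℕ, ((2:ℝ≥0∞))⁻¹ ^ (e+n+1)
      = ∑' e:ℕ, ((2:ℝ≥0∞))⁻¹^(n+1) * ((2:ℝ≥0∞))⁻¹^e := tsum_congr hstep
    _ = ((2:ℝ≥0∞))⁻¹^(n+1) * ∑' e:ℕ, ((2:ℝ≥0∞))⁻¹^e := ENNReal.tsum_mul_left
    _ = ((2:ℝ≥0∞))⁻¹^(n+1) * 2 := by
        rw [ENNReal.tsum_geometric, ENNReal.one_sub_inv_two, inv_inv]
    _ ≤ ((2:ℝ≥0∞))⁻¹^n := by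
        rw [pow_succ, mul_assoc, ENNReal.inv_mul_cancel (by norm_num) (by norm_num), mul_one]

end Enumeration
section Computability

open Nat.Partrec (Code)

lemma primrec_pow2 : Primrec (fun k : ℕ => 2^k) := by
  have h : Primrec (fun k : ℕ => Nat.rec (motive := fun _ => ℕ) 1 (fun _ ih => ih + ih) k) :=
    Primrec.nat_rec₁ 1 ((Primrec.nat_add.comp Primrec.snd Primrec.snd).to₂)
  refine h.of_eq fun k => ?_
  induction k with
  | zero => rfl
  | succ k ih => simp only [pow_succ]; rw [← ih]; simp [two_mul, Nat.mul_comm]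

lemma primrec_allb {γ α : Type*} [Primcodable γ] [Primcodable α]
    {p : γ → α → Bool} {L : γ → List α} (hp : Primrec₂ p) (hL : Primrec L) :
    Primrec fun g => allb (p g) (L g) := by
  have h := Primrec.list_foldr (β := α) (σ := Bool) hL (Primrec.const true)
    ((Primrec.and.comp (hp.comp Primrec.fst (Primrec.fst.comp Primrec.snd))
      (Primrec.snd.comp Primrec.snd)).to₂)
  exact h.of_eq fun g => rfl

lemma primrec_pfxb : Primrec₂ pfxb := by
  have h1 : Primrec fun p : List Bool × List Bool => decide (p.1.length ≤ p.2.length) :=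
    PrimrecPred.decide (Primrec.nat_le.comp (Primrec.list_length.comp Primrec.fst)
      (Primrec.list_length.comp Primrec.snd))
  have h2 : Primrec fun p : List Bool × List Bool =>
      allb (fun i => decide (p.1.getD i false = p.2.getD i false)) (List.range p.1.length) := by
    refine primrec_allb
      (p := fun (p : List Bool × List Bool) i => decide (p.1.getD i false = p.2.getD i false))
      (L := fun p => List.range p.1.length) ?_
      (Primrec.list_range.comp (Primrec.list_length.comp Primrec.fst))
    exact PrimrecPred.decide (Primrec.eq.comp
      ((Primrec.list_getD false).comp (Primrec.fst.comp Primrec.fst) Primrec.snd)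
      ((Primrec.list_getD false).comp (Primrec.snd.comp Primrec.fst) Primrec.snd))
  exact (Primrec.and.comp h1 h2).to₂

lemma primrec_memb : Primrec₂ memb := by
  have h : Primrec fun p : List Bool × List (List Bool) =>
      p.2.foldr (fun a r => decide (a = p.1) || r) false :=
    Primrec.list_foldr (β := List Bool) (σ := Bool) Primrec.snd (Primrec.const false)
      ((Primrec.or.comp
        (PrimrecPred.decide (Primrec.eq.comp (Primrec.fst.comp Primrec.snd) (Primrec.fst.comp Primrec.fst)))
        (Primrec.snd.comp Primrec.snd)).to₂)
  exact h.to₂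

lemma primrec_minb : Primrec₂ minb := by
  have h : Primrec fun p : List (List Bool) × List Bool =>
      allb (fun a => !(pfxb a p.2) || decide (a = p.2)) p.1 := by
    refine primrec_allb
      (p := fun (p : List (List Bool) × List Bool) a => !(pfxb a p.2) || decide (a = p.2))
      (L := Prod.fst) ?_ Primrec.fst
    exact (Primrec.or.comp
      (Primrec.not.comp (primrec_pfxb.comp Primrec.snd (Primrec.snd.comp Primrec.fst)))
      (PrimrecPred.decide (Primrec.eq.comp Primrec.snd (Primrec.snd.comp Primrec.fst))))
  exact h.to₂

lemma primrec_lsum : Primrec lsum := by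
  have h : Primrec fun L : List ℕ => L.foldr (· + ·) 0 :=
    Primrec.list_foldr (β := ℕ) (σ := ℕ) (Primrec.id (α := List ℕ)) (Primrec.const 0)
      ((Primrec.nat_add.comp (Primrec.fst.comp Primrec.snd) (Primrec.snd.comp Primrec.snd)).to₂)
  exact h

lemma primrec_wtsum : Primrec₂ wtsum := by
  have hmap : Primrec fun p : ℕ × List (List Bool) =>
      p.2.map (fun b => bif minb p.2 b then 2^(p.1 - b.length) else 0) := by
    refine Primrec.list_map
      (f := fun (p : ℕ × List (List Bool)) => p.2)
      (g := fun (p : ℕ × List (List Bool)) b => bif minb p.2 b then 2^(p.1 - b.length) else 0)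
      Primrec.snd ?_
    refine (Primrec.cond (primrec_minb.comp (Primrec.snd.comp Primrec.fst) Primrec.snd)
      (primrec_pow2.comp (Primrec.nat_sub.comp (Primrec.fst.comp Primrec.fst)
        (Primrec.list_length.comp Primrec.snd)))
      (Primrec.const 0)).to₂
  have h : Primrec fun p : ℕ × List (List Bool) =>
      lsum (p.2.map (fun b => bif minb p.2 b then 2^(p.1 - b.length) else 0)) :=
    primrec_lsum.comp hmap
  exact h.to₂

lemma primrec_Dof : Primrec₂ Dof := by
  have h : Primrec fun p : ℕ × List (List Bool) => p.1 + lsum (p.2.map List.length) :=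
    Primrec.nat_add.comp Primrec.fst
      (primrec_lsum.comp (Primrec.list_map Primrec.snd
        (Primrec.list_length.comp Primrec.snd).to₂))
  exact h.to₂

lemma primrec_okb : Primrec₂ okb := by
  have hD : Primrec fun p : ℕ × List (List Bool) => Dof p.1 p.2 :=
    primrec_Dof.comp Primrec.fst Primrec.snd
  have h : Primrec fun p : ℕ × List (List Bool) =>
      decide (wtsum (Dof p.1 p.2) p.2 ≤ 2^(Dof p.1 p.2 - p.1)) :=
    PrimrecPred.decide (Primrec.nat_le.comp
      (primrec_wtsum.comp hD Primrec.snd)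
      (primrec_pow2.comp (Primrec.nat_sub.comp hD Primrec.fst)))
  exact h.to₂

lemma primrec_enum : Primrec₂ enum := by
  have hk : Primrec fun p : Code × ℕ => p.2.unpair.2 :=
    Primrec.snd.comp (Primrec.unpair.comp Primrec.snd)
  have hs : Primrec fun p : Code × ℕ => p.2.unpair.1 :=
    Primrec.fst.comp (Primrec.unpair.comp Primrec.snd)
  have hdec : Primrec fun p : Code × ℕ => Encodable.decode (α := List Bool) p.2.unpair.2 :=
    Primrec.decode.comp hk
  have hev : Primrec fun q : (Code × ℕ) × List Bool =>
      Nat.Partrec.Code.evaln q.1.2.unpair.1 q.1.1 q.1.2.unpair.2 :=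
    Nat.Partrec.Code.primrec_evaln.comp (Primrec.pair (Primrec.pair (hs.comp Primrec.fst)
      (Primrec.fst.comp Primrec.fst)) (hk.comp Primrec.fst))
  have hg : Primrec₂ fun (p : Code × ℕ) (b : List Bool) =>
      if Encodable.encode b = p.2.unpair.2 ∧
          (Nat.Partrec.Code.evaln p.2.unpair.1 p.1 p.2.unpair.2).isSome = true
      then some b else none := by
    have hgu : Primrec fun q : (Code × ℕ) × List Bool =>
        if Encodable.encode q.2 = q.1.2.unpair.2 ∧
            (Nat.Partrec.Code.evaln q.1.2.unpair.1 q.1.1 q.1.2.unpair.2).isSome = true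
        then some q.2 else none := by
      refine Primrec.ite ?_ (Primrec.option_some.comp Primrec.snd)
        (Primrec.const (none : Option (List Bool)))
      refine PrimrecPred.and ?_ ?_
      · exact Primrec.eq.comp (Primrec.encode.comp Primrec.snd) (hk.comp Primrec.fst)
      · exact Primrec.eq.comp (Primrec.option_isSome.comp hev) (Primrec.const true)
    exact hgu.to₂
  have h : Primrec fun p : Code × ℕ =>
      (Encodable.decode (α := List Bool) p.2.unpair.2).bind fun b =>
        if Encodable.encode b = p.2.unpair.2 ∧
            (Nat.Partrec.Code.evaln p.2.unpair.1 p.1 p.2.unpair.2).isSome = true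
        then some b else none := Primrec.option_bind hdec hg
  exact h.to₂

lemma primrec_enum1 : Primrec₂ enum1 := by
  have henum : Primrec fun p : Code × ℕ => enum p.1 p.2 :=
    primrec_enum.comp Primrec.fst Primrec.snd
  have hg : Primrec₂ fun (p : Code × ℕ) (b : List Bool) =>
      if allb (fun t' => decide (¬ enum p.1 t' = some b)) (List.range p.2) = true
      then some b else none := by
    have hgu : Primrec fun q : (Code × ℕ) × List Bool =>
        if allb (fun t' => decide (¬ enum q.1.1 t' = some q.2)) (List.range q.1.2) = true
        then some q.2 else none := by
      refine Primrec.ite ?_ (Primrec.option_some.comp Primrec.snd)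
        (Primrec.const (none : Option (List Bool)))
      refine Primrec.eq.comp ?_ (Primrec.const true)
      refine primrec_allb
        (p := fun (q : (Code × ℕ) × List Bool) t' => decide (¬ enum q.1.1 t' = some q.2))
        (L := fun q => List.range q.1.2) ?_
        (Primrec.list_range.comp (Primrec.snd.comp Primrec.fst))
      have h1 : Primrec fun q : ((Code × ℕ) × List Bool) × ℕ => enum q.1.1.1 q.2 :=
        primrec_enum.comp (Primrec.fst.comp (Primrec.fst.comp Primrec.fst)) Primrec.snd
      exact PrimrecPred.decide (PrimrecPred.not
        (Primrec.eq.comp h1 (Primrec.option_some.comp (Primrec.snd.comp Primrec.fst))))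
    exact hgu.to₂
  have h : Primrec fun p : Code × ℕ =>
      (enum p.1 p.2).bind fun b =>
        if allb (fun t' => decide (¬ enum p.1 t' = some b)) (List.range p.2) = true
        then some b else none := Primrec.option_bind henum hg
  exact h.to₂

lemma primrec_stage : Primrec₂ stage := by
  have h : Primrec fun p : Code × ℕ => (List.range (p.2+1)).filterMap (enum1 p.1) := by
    refine Primrec.listFilterMap
      (f := fun p : Code × ℕ => List.range (p.2+1))
      (g := fun (p : Code × ℕ) u => enum1 p.1 u)
      (Primrec.list_range.comp (Primrec.succ.comp Primrec.snd)) ?_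
    exact primrec_enum1.comp (Primrec.fst.comp Primrec.fst) Primrec.snd
  exact h.to₂

lemma computable_stepN : Computable₂ stepN := by
  have hn : Primrec fun p : ℕ × ℕ => p.1.unpair.1 :=
    Primrec.fst.comp (Primrec.unpair.comp Primrec.fst)
  have hk : Primrec fun p : ℕ × ℕ => p.1.unpair.2 :=
    Primrec.snd.comp (Primrec.unpair.comp Primrec.fst)
  have he : Primrec fun p : ℕ × ℕ => p.2.unpair.1 :=
    Primrec.fst.comp (Primrec.unpair.comp Primrec.snd)
  have hs : Primrec fun p : ℕ × ℕ => p.2.unpair.2.unpair.1 :=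
    Primrec.fst.comp (Primrec.unpair.comp (Primrec.snd.comp (Primrec.unpair.comp Primrec.snd)))
  have hdec : Primrec fun p : ℕ × ℕ => Encodable.decode (α := List Bool) p.1.unpair.2 :=
    Primrec.decode.comp hk
  have hm : Primrec fun p : ℕ × ℕ => p.2.unpair.1 + p.1.unpair.1 + 1 :=
    Primrec.succ.comp (Primrec.nat_add.comp he hn)
  have hev : Primrec fun p : ℕ × ℕ =>
      Nat.Partrec.Code.evaln p.2.unpair.2.unpair.1 (Denumerable.ofNat Code p.2.unpair.1)
        (p.2.unpair.1 + p.1.unpair.1 + 1) :=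
    Nat.Partrec.Code.primrec_evaln.comp
      (Primrec.pair (Primrec.pair hs ((Primrec.ofNat Code).comp he)) hm)
  have hstage2 : Primrec fun q : ((ℕ × ℕ) × List Bool) × ℕ =>
      stage (Denumerable.ofNat Code q.2) q.1.1.2.unpair.2.unpair.2 := by
    have ht : Primrec fun q : ((ℕ × ℕ) × List Bool) × ℕ => q.1.1.2.unpair.2.unpair.2 :=
      Primrec.snd.comp (Primrec.unpair.comp (Primrec.snd.comp (Primrec.unpair.comp
        (Primrec.snd.comp (Primrec.fst.comp Primrec.fst)))))
    exact primrec_stage.comp ((Primrec.ofNat Code).comp Primrec.snd) ht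
  have hg2 : Primrec₂ fun (q : (ℕ × ℕ) × List Bool) (v : ℕ) =>
      (memb q.2 (stage (Denumerable.ofNat Code v) q.1.2.unpair.2.unpair.2) &&
        okb (q.1.2.unpair.1 + q.1.1.unpair.1 + 1)
          (stage (Denumerable.ofNat Code v) q.1.2.unpair.2.unpair.2)) := by
    refine (Primrec.and.comp
      (primrec_memb.comp (Primrec.snd.comp Primrec.fst) hstage2)
      (primrec_okb.comp (hm.comp (Primrec.fst.comp Primrec.fst)) hstage2)).to₂
  have hg1 : Primrec₂ fun (p : ℕ × ℕ) (b : List Bool) =>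
      Option.casesOn (motive := fun _ => Bool) (Nat.Partrec.Code.evaln p.2.unpair.2.unpair.1
          (Denumerable.ofNat Code p.2.unpair.1) (p.2.unpair.1 + p.1.unpair.1 + 1))
        false fun v =>
          (memb b (stage (Denumerable.ofNat Code v) p.2.unpair.2.unpair.2) &&
            okb (p.2.unpair.1 + p.1.unpair.1 + 1)
              (stage (Denumerable.ofNat Code v) p.2.unpair.2.unpair.2)) := by
    refine (Primrec.option_casesOn (hev.comp Primrec.fst) (Primrec.const false) hg2).to₂
  have h : Primrec fun p : ℕ × ℕ =>
      Option.casesOn (motive := fun _ => Bool) (Encodable.decode (α := List Bool) p.1.unpair.2) false fun b =>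
        Option.casesOn (motive := fun _ => Bool) (Nat.Partrec.Code.evaln p.2.unpair.2.unpair.1
            (Denumerable.ofNat Code p.2.unpair.1) (p.2.unpair.1 + p.1.unpair.1 + 1))
          false fun v =>
            (memb b (stage (Denumerable.ofNat Code v) p.2.unpair.2.unpair.2) &&
              okb (p.2.unpair.1 + p.1.unpair.1 + 1)
                (stage (Denumerable.ofNat Code v) p.2.unpair.2.unpair.2)) :=
    Primrec.option_casesOn hdec (Primrec.const false) hg1
  exact Primrec₂.to_comp h.to₂

end Computability
section Assembly

open Nat.Partrec (Code)

/-- There exists a universal Martin-Löf test. -/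
theorem stmt17 :
    ∃ f : ℕ → ℕ, MLTest f ∧
      ∀ (x : ℕ → Bool) (g : ℕ → ℕ), MLTest g → Fails x g → Fails x f := by
  -- the universal search function
  have hQ : Partrec fun z : ℕ => Nat.rfind ((stepN z : ℕ →. Bool)) :=
    Partrec.rfind computable_stepN.partrec₂
  obtain ⟨c0, hc0⟩ := Nat.Partrec.Code.exists_code.1 (Partrec.nat_iff.1 hQ)
  set f : ℕ → ℕ := fun n => Encodable.encode (Nat.Partrec.Code.curry c0 n) with hfdef
  have hfcomp : Computable f :=
    Primrec.to_comp (Primrec.encode.comp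
      (Nat.Partrec.Code.primrec₂_curry.comp (Primrec.const c0) Primrec.id))
  have hW : ∀ n, W (f n) = USet n := by
    intro n
    ext b
    show ((Denumerable.ofNat Code (f n)).eval (Encodable.encode b)).Dom ↔ _
    rw [hfdef, Denumerable.ofNat_encode, Nat.Partrec.Code.eval_curry, hc0]
    show (Nat.rfind ((stepN (Nat.pair n (Encodable.encode b)) : ℕ →. Bool))).Dom ↔ _
    rw [Nat.rfind_dom]
    simp only [PFun.coe_val, Part.mem_some_iff, Part.some_dom]
    constructor
    · rintro ⟨w, hw, -⟩
      exact ⟨w, hw.symm⟩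
    · rintro ⟨w, hw⟩
      exact ⟨w, hw.symm, fun {m} _ => trivial⟩
  refine ⟨f, ⟨hfcomp, fun n => ?_⟩, ?_⟩
  · rw [hW n]
    exact USet_measure n
  · intro x g hg hfails n
    rw [hW n]
    obtain ⟨hgc, hgm⟩ := hg
    obtain ⟨cg, hcg⟩ := Nat.Partrec.Code.exists_code.1 (Partrec.nat_iff.1 hgc.partrec)
    set e := Encodable.encode cg with he
    set m := e + n + 1 with hm
    have hv : g m ∈ (Denumerable.ofNat Code e).eval m := by
      rw [he, Denumerable.ofNat_encode, hcg]
      exact Part.mem_some _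
    have hT : TSet (Denumerable.ofNat Code (g m)) m = W (g m) := TSet_full (hgm m)
    have hx : x ∈ cyl (TSet (Denumerable.ofNat Code (g m)) m) := by
      rw [hT]
      exact hfails m
    obtain ⟨b, hbT, hpref⟩ := hx
    rw [USet_eq]
    refine ⟨b, ?_, hpref⟩
    exact Set.mem_iUnion.2 ⟨e, g m, hv, hbT⟩

end Assembly
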